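/- In the union automaton quotient construction, if the W-consistent partition is a fixed point of refinement, then every non-singleton block that contains nodes from both input automata is reached (in the quotient) by edges originating from a single block, and consequently the subgraph of the quotient automaton induced by the blocks containing nodes from both input automata together with the source block forms a tree rooted at the source block. -/
import Mathlib


def PathL {V A : Type} (E : V → V → A → Prop) : V → List A → V → Prop
  | u, [], v => u = v
  | u, a :: w, v => ∃ p, E u p a ∧ PathL E p w v

/-- A block is *special* if it contains nodes of both input automata
(ownership recorded by `g`). -/
def SpecialBlk {V : Type} (g : V → Bool) (P : ℕ → Set V) (i : ℕ) : Prop :=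
  (∃ v ∈ P i, g v = false) ∧ (∃ v ∈ P i, g v = true)

theorem pathL_snoc {V A : Type} (E : V → V → A → Prop) :
    ∀ (w : List A) (u v : V), PathL E u w v →
      (w = [] ∧ u = v) ∨ ∃ p a w', w = w' ++ [a] ∧ PathL E u w' p ∧ E p v a := by
  intro w
  induction w with
  | nil => intro u v h; exact Or.inl ⟨rfl, h⟩
  | cons a w ih =>
    intro u v h
    obtain ⟨p, he, hp⟩ := h
    rcases ih p v hp with ⟨rfl, rfl⟩ | ⟨q, b, w', rfl, hpw, hq⟩
    · exact Or.inr ⟨u, a, [], rfl, rfl, he⟩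
    · exact Or.inr ⟨q, b, a :: w', rfl, ⟨p, he, hpw⟩, hq⟩

open Classical in
noncomputable def parFn {V A : Type} (E : V → V → A → Prop) (P : ℕ → Set V)
    (k : ℕ) (i : ℕ) : ℕ :=
  if h : ∃ l, l ≤ k ∧ ∀ v ∈ P i, ∀ u a, E u v a → u ∈ P l then h.choose else 0

theorem parFn_spec {V A : Type} (E : V → V → A → Prop) (P : ℕ → Set V) (k i : ℕ)
    (h : ∃ l, l ≤ k ∧ ∀ v ∈ P i, ∀ u a, E u v a → u ∈ P l) :
    parFn E P k i ≤ k ∧ ∀ v ∈ P i, ∀ u a, E u v a → u ∈ P (parFn E P k i) := by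
  unfold parFn
  rw [dif_pos h]
  exact ⟨h.choose_spec.1, h.choose_spec.2⟩

/-- Structural claim used in the proof of Lemma 12.  If the W-consistent
partition `P 0, …, P k` of the union automaton is a fixed point of the
refinement (all incoming edges of a non-singleton block come from a single
block) and every non-singleton block is special, then in the quotient automaton
every special block is reached by edges originating from a single block `par i`
which is the source block or special itself, and iterating `par` from any
special block reaches the source block:  the special blocks together with the
source block form a tree rooted at the source block. -/
theorem stmt_18 {V A : Type}
    (E : V → V → A → Prop) (s : V) (g : V → Bool)
    (P : ℕ → Set V) (k : ℕ)
    (hP0 : P 0 = {s})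
    (hcover : ∀ v, ∃ i ≤ k, v ∈ P i)
    (hdisj : ∀ i i' v, i ≤ k → i' ≤ k → v ∈ P i → v ∈ P i' → i = i')
    (hsrc : ∀ u a, ¬ E u s a)
    (hreach : ∀ v : V, ∃ w, PathL E s w v)
    (hside : ∀ u v a, E u v a → u = s ∨ g u = g v)
    (hfix : ∀ i ≤ k, (∃ v ∈ P i, ∃ w ∈ P i, v ≠ w) →
      ∃ l ≤ k, ∀ v ∈ P i, ∀ u a, E u v a → u ∈ P l)
    (hns : ∀ i ≤ k, (∃ v ∈ P i, ∃ w ∈ P i, v ≠ w) → SpecialBlk g P i) :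
    ∃ par : ℕ → ℕ, ∀ i ≤ k, SpecialBlk g P i →
      (par i ≤ k ∧
       (∀ j a, j ≤ k → (∃ v ∈ P j, ∃ v' ∈ P i, E v v' a) → j = par i) ∧
       (par i = 0 ∨ SpecialBlk g P (par i)) ∧
       (∃ t : ℕ, par^[t] i = 0)) := by
  classical
  have hex : ∀ i, i ≤ k → SpecialBlk g P i →
      ∃ l, l ≤ k ∧ ∀ v ∈ P i, ∀ u a, E u v a → u ∈ P l := by
    intro i hik hsp
    obtain ⟨⟨v0, hv0, hg0⟩, ⟨v1, hv1, hg1⟩⟩ := hsp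
    have hne : v0 ≠ v1 := fun h => by rw [h, hg1] at hg0; exact Bool.noConfusion hg0
    obtain ⟨l, hl, hprop⟩ := hfix i hik ⟨v0, hv0, v1, hv1, hne⟩
    exact ⟨l, hl, hprop⟩
  have hs_not : ∀ i, i ≤ k → SpecialBlk g P i → s ∉ P i := by
    intro i hik hsp hsi
    have h0 : s ∈ P 0 := by simp [hP0]
    have h0i : 0 = i := hdisj 0 i s (Nat.zero_le k) hik h0 hsi
    subst h0i
    obtain ⟨⟨v0, hv0, hg0⟩, ⟨v1, hv1, hg1⟩⟩ := hsp
    rw [hP0] at hv0 hv1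
    simp only [Set.mem_singleton_iff] at hv0 hv1
    rw [hv0] at hg0; rw [hv1] at hg1
    rw [hg1] at hg0; exact Bool.noConfusion hg0
  have hpar_special : ∀ i, i ≤ k → SpecialBlk g P i → parFn E P k i ≠ 0 →
      SpecialBlk g P (parFn E P k i) := by
    intro i hik hsp hne0
    obtain ⟨hlk, hall⟩ := parFn_spec E P k i (hex i hik hsp)
    have get : ∀ v ∈ P i, ∃ u, u ∈ P (parFn E P k i) ∧ (u = s ∨ g u = g v) := by
      intro v hv
      obtain ⟨w, hw⟩ := hreach v
      have hvs : v ≠ s := fun h => hs_not i hik hsp (h ▸ hv)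
      rcases pathL_snoc E w s v hw with ⟨_, h⟩ | ⟨u, a, w', _, hw', he⟩
      · exact absurd h.symm hvs
      · exact ⟨u, hall v hv u a he, hside u v a he⟩
    have hnots : ∀ u, u ∈ P (parFn E P k i) → u ≠ s := by
      intro u hu h; subst h
      have h0 : u ∈ P 0 := by simp [hP0]
      exact hne0 (hdisj _ 0 u hlk (Nat.zero_le k) hu h0)
    obtain ⟨⟨v0, hv0, hg0⟩, ⟨v1, hv1, hg1⟩⟩ := hsp
    obtain ⟨u0, hu0, hc0⟩ := get v0 hv0
    obtain ⟨u1, hu1, hc1⟩ := get v1 hv1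
    rcases hc0 with h | h
    · exact absurd h (hnots u0 hu0)
    rcases hc1 with h' | h'
    · exact absurd h' (hnots u1 hu1)
    exact ⟨⟨u0, hu0, h.trans hg0⟩, ⟨u1, hu1, h'.trans hg1⟩⟩
  have hterm : ∀ n i, i ≤ k → SpecialBlk g P i →
      (∃ v ∈ P i, ∃ w, PathL E s w v ∧ w.length ≤ n) →
      ∃ t, (parFn E P k)^[t] i = 0 := by
    intro n
    induction n with
    | zero =>
      rintro i hik hsp ⟨v, hv, w, hw, hlen⟩
      have hwn : w = [] := List.length_eq_zero_iff.mp (Nat.le_zero.mp hlen)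
      subst hwn
      have hsv : s = v := hw
      exact absurd (hsv ▸ hv) (hs_not i hik hsp)
    | succ n ih =>
      rintro i hik hsp ⟨v, hv, w, hw, hlen⟩
      obtain ⟨hlk, hall⟩ := parFn_spec E P k i (hex i hik hsp)
      have hvs : v ≠ s := fun h => hs_not i hik hsp (h ▸ hv)
      rcases pathL_snoc E w s v hw with ⟨_, h⟩ | ⟨u, a, w', rfl, hw', he⟩
      · exact absurd h.symm hvs
      · have hu : u ∈ P (parFn E P k i) := hall v hv u a he
        by_cases h0 : parFn E P k i = 0
        · exact ⟨1, by simpa using h0⟩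
        · have hsp' := hpar_special i hik hsp h0
          have hlen' : w'.length ≤ n := by
            simp only [List.length_append, List.length_singleton] at hlen
            omega
          obtain ⟨t, ht⟩ := ih (parFn E P k i) hlk hsp' ⟨u, hu, w', hw', hlen'⟩
          exact ⟨t + 1, by rw [Function.iterate_succ_apply]; exact ht⟩
  refine ⟨parFn E P k, fun i hik hsp => ?_⟩
  obtain ⟨hlk, hall⟩ := parFn_spec E P k i (hex i hik hsp)
  refine ⟨hlk, ?_, ?_, ?_⟩
  · rintro j a hjk ⟨v, hv, v', hv', he⟩
    exact hdisj j (parFn E P k i) v hjk hlk hv (hall v' hv' v a he)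
  · by_cases h0 : parFn E P k i = 0
    · exact Or.inl h0
    · exact Or.inr (hpar_special i hik hsp h0)
  · obtain ⟨v0, hv0, -⟩ := hsp.1
    obtain ⟨w, hw⟩ := hreach v0
    exact hterm w.length i hik hsp ⟨v0, hv0, w, hw, le_rfl⟩
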